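/- Fix real numbers δv > 0, 0 < δz < 2, c > 0, and an integer N ≥ 2, and let W = X⁻¹Y. Then for all 1 ≤ q, q' ≤ N−1, the absolute value of the entry W_{q,q'} equals the sum of the absolute values of its three constituents: |W_{q,q'}| = |(X⁻¹)_{q,q'−1}|·|y₃| + |(X⁻¹)_{q,q'}|·|y₂| + |(X⁻¹)_{q,q'+1}|·|y₁|, where (X⁻¹)_{q,q'} is taken to be 0 whenever q' ∉ {1, …, N−1}. -/

import Mathlib

open Matrix Finset

/-- Tridiagonal Toeplitz matrix of size `n × n` with diagonal value `a`,
subdiagonal value `b` and superdiagonal value `d`. -/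
def tridiag (n : ℕ) (b a d : ℝ) : Matrix (Fin n) (Fin n) ℝ :=
  Matrix.of fun q q' : Fin n =>
    if (q : ℤ) = (q' : ℤ) then a
    else if (q : ℤ) = (q' : ℤ) + 1 then b
    else if (q : ℤ) + 1 = (q' : ℤ) then d
    else 0


/-- A matrix with nonpositive off-diagonal entries and positive row sums maps
nonnegative-image vectors to nonnegative vectors. -/
lemma aux_mulVec_nonneg {n : ℕ} (A : Matrix (Fin n) (Fin n) ℝ)
    (hoff : ∀ i j, i ≠ j → A i j ≤ 0)
    (hrow : ∀ i, 0 < ∑ j, A i j)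
    (x : Fin n → ℝ) (hx : ∀ i, 0 ≤ A.mulVec x i) : ∀ i, 0 ≤ x i := by
  by_contra h
  push_neg at h
  obtain ⟨i, hi⟩ := h
  obtain ⟨i₀, -, hmin⟩ := Finset.exists_min_image Finset.univ x ⟨i, Finset.mem_univ i⟩
  have hmin' : ∀ j, x i₀ ≤ x j := fun j => hmin j (Finset.mem_univ j)
  have hneg : x i₀ < 0 := lt_of_le_of_lt (hmin' i) hi
  have h1 : A.mulVec x i₀ ≤ (∑ j, A i₀ j) * x i₀ := by
    rw [Matrix.mulVec, dotProduct, Finset.sum_mul]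
    apply Finset.sum_le_sum
    intro j _
    rcases eq_or_ne j i₀ with rfl | hj
    · exact le_refl _
    · exact mul_le_mul_of_nonpos_left (hmin' j) (hoff i₀ j (Ne.symm hj))
  have h2 : (∑ j, A i₀ j) * x i₀ < 0 := mul_neg_of_pos_of_neg (hrow i₀) hneg
  linarith [hx i₀]

lemma aux_isUnit {n : ℕ} (A : Matrix (Fin n) (Fin n) ℝ)
    (hoff : ∀ i j, i ≠ j → A i j ≤ 0)
    (hrow : ∀ i, 0 < ∑ j, A i j) : IsUnit A := by
  rw [← Matrix.mulVec_injective_iff_isUnit]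
  have h0 : ∀ x, A.mulVec x = 0 → x = 0 := by
    intro x hx
    have h1 : ∀ i, 0 ≤ x i :=
      aux_mulVec_nonneg A hoff hrow x (fun i => by simp [hx])
    have h2 : ∀ i, 0 ≤ (-x) i :=
      aux_mulVec_nonneg A hoff hrow (-x) (fun i => by
        rw [Matrix.mulVec_neg, hx]; simp)
    funext i
    have := h2 i
    simp only [Pi.neg_apply, Left.nonneg_neg_iff] at this
    exact le_antisymm this (h1 i)
  intro x y hxy
  have hz : A.mulVec (x - y) = 0 := by rw [Matrix.mulVec_sub, hxy, sub_self]
  exact sub_eq_zero.mp (h0 _ hz)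

lemma aux_inv_nonneg {n : ℕ} (A : Matrix (Fin n) (Fin n) ℝ)
    (hoff : ∀ i j, i ≠ j → A i j ≤ 0)
    (hrow : ∀ i, 0 < ∑ j, A i j) : ∀ i j, 0 ≤ A⁻¹ i j := by
  have hu := aux_isUnit A hoff hrow
  have hAB : A * A⁻¹ = 1 := Matrix.mul_nonsing_inv A (A.isUnit_iff_isUnit_det.mp hu)
  intro i j
  refine aux_mulVec_nonneg A hoff hrow (fun k => A⁻¹ k j) (fun i' => ?_) i
  have he : A.mulVec (fun k => A⁻¹ k j) i' = (A * A⁻¹) i' j := by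
    simp [Matrix.mulVec, dotProduct, Matrix.mul_apply]
  rw [he, hAB]
  by_cases h : i' = j <;> simp [Matrix.one_apply, h]

/-- sign-conjugation of a matrix -/
noncomputable def conjM {n : ℕ} (M : Matrix (Fin n) (Fin n) ℝ) : Matrix (Fin n) (Fin n) ℝ :=
  Matrix.of fun i j => (-1 : ℝ) ^ ((i : ℕ) + (j : ℕ)) * M i j

lemma neg_one_pow_combine (a b k : ℕ) :
    (-1 : ℝ) ^ (a + k) * (-1 : ℝ) ^ (k + b) = (-1 : ℝ) ^ (a + b) := by
  rw [← pow_add]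
  have h : a + k + (k + b) = (a + b) + 2 * k := by ring
  rw [h, pow_add, pow_mul, neg_one_sq, one_pow, mul_one]

lemma conjM_mul {n : ℕ} (M N' : Matrix (Fin n) (Fin n) ℝ) :
    conjM M * conjM N' = conjM (M * N') := by
  ext i j
  simp only [conjM, Matrix.mul_apply, Matrix.of_apply, Finset.mul_sum]
  refine Finset.sum_congr rfl fun k _ => ?_
  have : (-1 : ℝ) ^ ((i : ℕ) + (k : ℕ)) * M i k * ((-1) ^ ((k : ℕ) + (j : ℕ)) * N' k j)
      = ((-1 : ℝ) ^ ((i : ℕ) + (k : ℕ)) * (-1) ^ ((k : ℕ) + (j : ℕ))) * (M i k * N' k j) := by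
    ring
  rw [this, neg_one_pow_combine]

lemma conjM_one {n : ℕ} : conjM (1 : Matrix (Fin n) (Fin n) ℝ) = 1 := by
  ext i j
  by_cases h : i = j
  · subst h
    simp only [conjM, Matrix.of_apply, Matrix.one_apply_eq]
    rw [← two_mul, pow_mul, neg_one_sq, one_pow, mul_one]
  · simp [conjM, Matrix.one_apply, h]

lemma conjM_conjM {n : ℕ} (M : Matrix (Fin n) (Fin n) ℝ) : conjM (conjM M) = M := by
  ext i j
  simp only [conjM, Matrix.of_apply]
  rw [← mul_assoc, ← pow_add, ← two_mul, pow_mul, neg_one_sq, one_pow, one_mul]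

lemma aux_sum_ite_le {n : ℕ} (s : Finset (Fin n)) (p : Fin n → Prop) [DecidablePred p]
    (hp : ∀ j k, p j → p k → j = k) {c : ℝ} (hc : 0 ≤ c) :
    ∑ j ∈ s, (if p j then c else 0) ≤ c := by
  by_cases h : ∃ j₀ ∈ s, p j₀
  · obtain ⟨j₀, hj₀s, hj₀⟩ := h
    have heq : ∀ j ∈ s, (if p j then c else 0) = (if j = j₀ then c else 0) := by
      intro j _
      by_cases hj : p j
      · rw [if_pos hj, if_pos (hp j j₀ hj hj₀)]
      · rw [if_neg hj, if_neg (fun he' : j = j₀ => hj (by rw [he']; exact hj₀))]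
    rw [Finset.sum_congr rfl heq, Finset.sum_ite_eq' s j₀ (fun _ => c), if_pos hj₀s]
  · push_neg at h
    have : ∀ j ∈ s, (if p j then c else 0) = 0 := fun j hj => if_neg (h j hj)
    rw [Finset.sum_congr rfl this, Finset.sum_const_zero]
    exact hc

lemma aux_hoffA {n : ℕ} {b a d : ℝ} (hb : 0 ≤ b) (hd : 0 ≤ d) :
    ∀ i j : Fin n, i ≠ j → conjM (tridiag n b a d) i j ≤ 0 := by
  intro i j hij
  have hij' : ¬ ((i : ℤ) = (j : ℤ)) := fun h => hij (Fin.ext (by exact_mod_cast h))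
  simp only [conjM, Matrix.of_apply, tridiag]
  rw [if_neg hij']
  by_cases h1 : (i : ℤ) = (j : ℤ) + 1
  · rw [if_pos h1]
    have hval : (i : ℕ) = (j : ℕ) + 1 := by exact_mod_cast h1
    have hodd : Odd ((i : ℕ) + (j : ℕ)) := ⟨(j : ℕ), by omega⟩
    rw [hodd.neg_one_pow]; nlinarith
  · rw [if_neg h1]
    by_cases h2 : (i : ℤ) + 1 = (j : ℤ)
    · rw [if_pos h2]
      have hval : (j : ℕ) = (i : ℕ) + 1 := by exact_mod_cast h2.symm
      have hodd : Odd ((i : ℕ) + (j : ℕ)) := ⟨(i : ℕ), by omega⟩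
      rw [hodd.neg_one_pow]; nlinarith
    · rw [if_neg h2]; simp

lemma aux_hrowA {n : ℕ} {b a d : ℝ} (hb : 0 ≤ b) (hd : 0 ≤ d) (hbd : b + d < a) :
    ∀ i : Fin n, 0 < ∑ j, conjM (tridiag n b a d) i j := by
  intro i
  classical
  have hdiag : conjM (tridiag n b a d) i i = a := by
    simp only [conjM, Matrix.of_apply, tridiag]
    rw [if_pos trivial, ← two_mul, pow_mul, neg_one_sq, one_pow, one_mul]
  have hsplit : conjM (tridiag n b a d) i i
      + ∑ j ∈ Finset.univ.erase i, conjM (tridiag n b a d) i j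
      = ∑ j, conjM (tridiag n b a d) i j :=
    Finset.add_sum_erase _ _ (Finset.mem_univ i)
  have hp1 : ∀ j k : Fin n, (i : ℤ) = (j : ℤ) + 1 → (i : ℤ) = (k : ℤ) + 1 → j = k :=
    fun j k hj hk => Fin.ext (by omega)
  have hp2 : ∀ j k : Fin n, (i : ℤ) + 1 = (j : ℤ) → (i : ℤ) + 1 = (k : ℤ) → j = k :=
    fun j k hj hk => Fin.ext (by omega)
  have hbound : ∀ j ∈ Finset.univ.erase i, -(conjM (tridiag n b a d) i j) ≤
      (if (i : ℤ) = (j : ℤ) + 1 then b else 0) + (if (i : ℤ) + 1 = (j : ℤ) then d else 0) := by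
    intro j hj
    have hji : j ≠ i := (Finset.mem_erase.mp hj).1
    have hij' : ¬ ((i : ℤ) = (j : ℤ)) := fun h => hji (Fin.ext (by exact_mod_cast h)).symm
    simp only [conjM, Matrix.of_apply, tridiag]
    rw [if_neg hij']
    by_cases h1 : (i : ℤ) = (j : ℤ) + 1
    · rw [if_pos h1, if_pos h1, if_neg (show ¬ ((i : ℤ) + 1 = (j : ℤ)) by omega)]
      have hval : (i : ℕ) = (j : ℕ) + 1 := by exact_mod_cast h1
      have hodd : Odd ((i : ℕ) + (j : ℕ)) := ⟨(j : ℕ), by omega⟩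
      rw [hodd.neg_one_pow]; linarith
    · rw [if_neg h1, if_neg h1]
      by_cases h2 : (i : ℤ) + 1 = (j : ℤ)
      · rw [if_pos h2]
        have hval : (j : ℕ) = (i : ℕ) + 1 := by exact_mod_cast h2.symm
        have hodd : Odd ((i : ℕ) + (j : ℕ)) := ⟨(i : ℕ), by omega⟩
        rw [hodd.neg_one_pow]; linarith
      · rw [if_neg h2]; simp
  have hkey : ∑ j ∈ Finset.univ.erase i, -(conjM (tridiag n b a d) i j) ≤ b + d := by
    calc ∑ j ∈ Finset.univ.erase i, -(conjM (tridiag n b a d) i j)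
        ≤ ∑ j ∈ Finset.univ.erase i,
            ((if (i : ℤ) = (j : ℤ) + 1 then b else 0)
              + (if (i : ℤ) + 1 = (j : ℤ) then d else 0)) :=
          Finset.sum_le_sum hbound
      _ = (∑ j ∈ Finset.univ.erase i, if (i : ℤ) = (j : ℤ) + 1 then b else 0)
          + (∑ j ∈ Finset.univ.erase i, if (i : ℤ) + 1 = (j : ℤ) then d else 0) :=
          Finset.sum_add_distrib
      _ ≤ b + d :=
          add_le_add (aux_sum_ite_le _ _ hp1 hb) (aux_sum_ite_le _ _ hp2 hd)
  have hneg : -(b + d) ≤ ∑ j ∈ Finset.univ.erase i, conjM (tridiag n b a d) i j := by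
    have h := hkey
    rw [Finset.sum_neg_distrib] at h
    linarith
  linarith [hsplit, hdiag, hneg, hbd]

lemma aux_inv_eq {n : ℕ} {b a d : ℝ} (hb : 0 ≤ b) (hd : 0 ≤ d) (hbd : b + d < a) :
    (tridiag n b a d)⁻¹ = conjM ((conjM (tridiag n b a d))⁻¹) := by
  have hu : IsUnit (conjM (tridiag n b a d)) :=
    aux_isUnit _ (aux_hoffA hb hd) (aux_hrowA hb hd hbd)
  have hAB : conjM (tridiag n b a d) * (conjM (tridiag n b a d))⁻¹ = 1 :=
    Matrix.mul_nonsing_inv _ ((Matrix.isUnit_iff_isUnit_det _).mp hu)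
  apply Matrix.inv_eq_right_inv
  calc tridiag n b a d * conjM ((conjM (tridiag n b a d))⁻¹)
      = conjM (conjM (tridiag n b a d)) * conjM ((conjM (tridiag n b a d))⁻¹) := by
        rw [conjM_conjM]
    _ = conjM (conjM (tridiag n b a d) * (conjM (tridiag n b a d))⁻¹) := conjM_mul _ _
    _ = conjM 1 := by rw [hAB]
    _ = 1 := conjM_one

lemma aux_Y_sign {n : ℕ} {b a d : ℝ} (hb : b ≤ 0) (ha : 0 ≤ a) (hd : d ≤ 0) (k q' : Fin n) :
    tridiag n b a d k q' = (-1 : ℝ) ^ ((k : ℕ) + (q' : ℕ)) * |tridiag n b a d k q'| := by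
  simp only [tridiag, Matrix.of_apply]
  by_cases h0 : (k : ℤ) = (q' : ℤ)
  · rw [if_pos h0]
    have hval : (k : ℕ) = (q' : ℕ) := by exact_mod_cast h0
    have heven : Even ((k : ℕ) + (q' : ℕ)) := ⟨(k : ℕ), by omega⟩
    rw [heven.neg_one_pow, one_mul, abs_of_nonneg ha]
  · rw [if_neg h0]
    by_cases h1 : (k : ℤ) = (q' : ℤ) + 1
    · rw [if_pos h1]
      have hval : (k : ℕ) = (q' : ℕ) + 1 := by exact_mod_cast h1
      have hodd : Odd ((k : ℕ) + (q' : ℕ)) := ⟨(q' : ℕ), by omega⟩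
      rw [hodd.neg_one_pow, abs_of_nonpos hb]; ring
    · rw [if_neg h1]
      by_cases h2 : (k : ℤ) + 1 = (q' : ℤ)
      · rw [if_pos h2]
        have hval : (q' : ℕ) = (k : ℕ) + 1 := by exact_mod_cast h2.symm
        have hodd : Odd ((k : ℕ) + (q' : ℕ)) := ⟨(k : ℕ), by omega⟩
        rw [hodd.neg_one_pow, abs_of_nonpos hd]; ring
      · rw [if_neg h2]; simp

lemma aux_Y_abs_split {n : ℕ} (b a d : ℝ) (k q' : Fin n) :
    |tridiag n b a d k q'| =
      (if (k : ℤ) = (q' : ℤ) - 1 then |d| else 0) +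
      (if (k : ℤ) = (q' : ℤ) then |a| else 0) +
      (if (k : ℤ) = (q' : ℤ) + 1 then |b| else 0) := by
  simp only [tridiag, Matrix.of_apply]
  by_cases h0 : (k : ℤ) = (q' : ℤ)
  · rw [if_pos h0, if_pos h0, if_neg (show ¬ ((k : ℤ) = (q' : ℤ) - 1) by omega),
      if_neg (show ¬ ((k : ℤ) = (q' : ℤ) + 1) by omega)]
    ring
  · rw [if_neg h0, if_neg h0]
    by_cases h1 : (k : ℤ) = (q' : ℤ) + 1
    · rw [if_pos h1, if_pos h1, if_neg (show ¬ ((k : ℤ) = (q' : ℤ) - 1) by omega)]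
      ring
    · rw [if_neg h1, if_neg h1]
      by_cases h2 : (k : ℤ) + 1 = (q' : ℤ)
      · rw [if_pos h2, if_pos (show (k : ℤ) = (q' : ℤ) - 1 by omega)]
        ring
      · rw [if_neg h2, if_neg (show ¬ ((k : ℤ) = (q' : ℤ) - 1) by omega)]
        simp

/-- The matrix `X` of the fully discrete Crank–Nicolson compact scheme. -/
noncomputable def Xmat (N : ℕ) (δv δz : ℝ) : Matrix (Fin (N - 1)) (Fin (N - 1)) ℝ :=
  tridiag (N - 1) ((2 + δz) / (24 * δv)) (5 / (6 * δv)) ((2 - δz) / (24 * δv))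

/-- The matrix `Y` of the fully discrete Crank–Nicolson compact scheme. -/
noncomputable def Ymat (N : ℕ) (δz c : ℝ) : Matrix (Fin (N - 1)) (Fin (N - 1)) ℝ :=
  tridiag (N - 1) (-(c / (4 * δz)) - (c + c * δz ^ 2 / 12) / (2 * δz ^ 2))
    ((c + c * δz ^ 2 / 12) / δz ^ 2)
    (c / (4 * δz) - (c + c * δz ^ 2 / 12) / (2 * δz ^ 2))

/-- `W = X⁻¹ Y`. -/
noncomputable def Wmat (N : ℕ) (δv δz c : ℝ) : Matrix (Fin (N - 1)) (Fin (N - 1)) ℝ :=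
  (Xmat N δv δz)⁻¹ * Ymat N δz c

/-- The entry `A_{q,j}` of a matrix where the column index `j : ℤ` may lie
outside the index range, in which case the value is `0`. -/
noncomputable def entryExt {n : ℕ} (A : Matrix (Fin n) (Fin n) ℝ) (q : Fin n)
    (j : ℤ) : ℝ :=
  ∑ j' : Fin n, if (j' : ℤ) = j then A q j' else 0

/-- the absolute value of each entry of `W = X⁻¹Y` equals the sum of
the absolute values of its three constituents, entries of `X⁻¹` out of range
being taken as `0`. -/
theorem stmt7 (δv δz c : ℝ) (hδv : 0 < δv) (hδz : 0 < δz) (hδz2 : δz < 2)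
    (hc : 0 < c) (N : ℕ) (hN : 2 ≤ N) :
    ∀ q q' : Fin (N - 1),
      |Wmat N δv δz c q q'| =
        |entryExt (Xmat N δv δz)⁻¹ q ((q' : ℤ) - 1)| *
            |c / (4 * δz) - (c + c * δz ^ 2 / 12) / (2 * δz ^ 2)| +
          |(Xmat N δv δz)⁻¹ q q'| * |(c + c * δz ^ 2 / 12) / δz ^ 2| +
          |entryExt (Xmat N δv δz)⁻¹ q ((q' : ℤ) + 1)| *
            |-(c / (4 * δz)) - (c + c * δz ^ 2 / 12) / (2 * δz ^ 2)| := by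
  intro q q'
  have hb : (0:ℝ) < (2 + δz) / (24 * δv) := by positivity
  have hd : (0:ℝ) < (2 - δz) / (24 * δv) := div_pos (by linarith) (by positivity)
  have hbd : (2 + δz) / (24 * δv) + (2 - δz) / (24 * δv) < 5 / (6 * δv) := by
    rw [← add_div, div_lt_div_iff₀ (by positivity) (by positivity)]
    nlinarith
  have hy2 : (0:ℝ) < (c + c * δz ^ 2 / 12) / δz ^ 2 := by positivity
  have hy1 : (-(c / (4 * δz)) - (c + c * δz ^ 2 / 12) / (2 * δz ^ 2)) < 0 := by
    have h1 : (0:ℝ) < c / (4 * δz) := by positivity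
    have h2 : (0:ℝ) < (c + c * δz ^ 2 / 12) / (2 * δz ^ 2) := by positivity
    linarith
  have hy3 : (c / (4 * δz) - (c + c * δz ^ 2 / 12) / (2 * δz ^ 2)) < 0 := by
    rw [sub_neg, div_lt_div_iff₀ (by positivity) (by positivity)]
    nlinarith [mul_pos (mul_pos hc hδz) (sub_pos.mpr hδz2),
      mul_pos (mul_pos (mul_pos hc hδz) hδz) hδz]
  simp only [Wmat, Xmat, Ymat]
  set b := (2 + δz) / (24 * δv) with hbdef
  set a := (5:ℝ) / (6 * δv) with hadef
  set d := (2 - δz) / (24 * δv) with hddef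
  set y₁ := -(c / (4 * δz)) - (c + c * δz ^ 2 / 12) / (2 * δz ^ 2) with hy1def
  set y₂ := (c + c * δz ^ 2 / 12) / δz ^ 2 with hy2def
  set y₃ := c / (4 * δz) - (c + c * δz ^ 2 / 12) / (2 * δz ^ 2) with hy3def
  set X := tridiag (N - 1) b a d with hXdef
  set B := (conjM X)⁻¹ with hBdef
  have hXinv : X⁻¹ = conjM B := aux_inv_eq hb.le hd.le hbd
  have hP : ∀ i j, 0 ≤ B i j :=
    aux_inv_nonneg _ (aux_hoffA hb.le hd.le) (aux_hrowA hb.le hd.le hbd)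
  have habs : ∀ i j, |X⁻¹ i j| = B i j := by
    intro i j
    rw [hXinv]
    simp only [conjM, Matrix.of_apply]
    rw [abs_mul, abs_pow, abs_neg, abs_one, one_pow, one_mul, abs_of_nonneg (hP i j)]
  have hW : (X⁻¹ * tridiag (N - 1) y₁ y₂ y₃) q q'
      = (-1 : ℝ) ^ ((q : ℕ) + (q' : ℕ))
        * ∑ k, B q k * |tridiag (N - 1) y₁ y₂ y₃ k q'| := by
    rw [Matrix.mul_apply, Finset.mul_sum]
    refine Finset.sum_congr rfl fun k _ => ?_
    have hx : X⁻¹ q k = (-1 : ℝ) ^ ((q : ℕ) + (k : ℕ)) * B q k := by rw [hXinv]; rfl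
    have hy : tridiag (N - 1) y₁ y₂ y₃ k q'
        = (-1 : ℝ) ^ ((k : ℕ) + (q' : ℕ)) * |tridiag (N - 1) y₁ y₂ y₃ k q'| :=
      aux_Y_sign hy1.le hy2.le hy3.le k q'
    rw [hx]
    conv_lhs => rw [hy]
    rw [show (-1 : ℝ) ^ ((q : ℕ) + (k : ℕ)) * B q k
        * ((-1 : ℝ) ^ ((k : ℕ) + (q' : ℕ)) * |tridiag (N - 1) y₁ y₂ y₃ k q'|)
        = ((-1 : ℝ) ^ ((q : ℕ) + (k : ℕ)) * (-1 : ℝ) ^ ((k : ℕ) + (q' : ℕ)))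
          * (B q k * |tridiag (N - 1) y₁ y₂ y₃ k q'|) from by ring,
      neg_one_pow_combine]
  rw [hW, abs_mul, abs_pow, abs_neg, abs_one, one_pow, one_mul,
    abs_of_nonneg (Finset.sum_nonneg fun k _ => mul_nonneg (hP q k) (abs_nonneg _))]
  have hsplit : ∀ k : Fin (N - 1), B q k * |tridiag (N - 1) y₁ y₂ y₃ k q'| =
      (if (k : ℤ) = (q' : ℤ) - 1 then B q k * |y₃| else 0)
    + (if (k : ℤ) = (q' : ℤ) then B q k * |y₂| else 0)
    + (if (k : ℤ) = (q' : ℤ) + 1 then B q k * |y₁| else 0) := by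
    intro k
    rw [aux_Y_abs_split, mul_add, mul_add, mul_ite, mul_zero, mul_ite, mul_zero,
      mul_ite, mul_zero]
  rw [Finset.sum_congr rfl fun k _ => hsplit k, Finset.sum_add_distrib,
    Finset.sum_add_distrib]
  have hcol : ∀ (m : ℤ) (C : ℝ),
      (∑ k : Fin (N - 1), if (k : ℤ) = m then B q k * C else 0) = |entryExt X⁻¹ q m| * C := by
    intro m C
    by_cases h : ∃ k₀ : Fin (N - 1), (k₀ : ℤ) = m
    · obtain ⟨k₀, hk₀⟩ := h
      have hiff : ∀ k : Fin (N - 1), ((k : ℤ) = m) = (k = k₀) := fun k =>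
        propext ⟨fun hk => Fin.ext (by omega), fun hk => by rw [hk]; exact hk₀⟩
      have he : entryExt X⁻¹ q m = X⁻¹ q k₀ := by
        unfold entryExt
        simp only [hiff]
        rw [Finset.sum_ite_eq' Finset.univ k₀, if_pos (Finset.mem_univ k₀)]
      simp only [hiff]
      rw [Finset.sum_ite_eq' Finset.univ k₀ (fun k => B q k * C),
        if_pos (Finset.mem_univ k₀), he, habs]
    · push_neg at h
      have he : entryExt X⁻¹ q m = 0 := Finset.sum_eq_zero fun k _ => if_neg (h k)
      rw [Finset.sum_eq_zero fun k _ => if_neg (h k), he, abs_zero, zero_mul]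
  have hmid : (∑ k : Fin (N - 1), if (k : ℤ) = (q' : ℤ) then B q k * |y₂| else 0)
      = |X⁻¹ q q'| * |y₂| := by
    have hiff : ∀ k : Fin (N - 1), ((k : ℤ) = (q' : ℤ)) = (k = q') := fun k =>
      propext ⟨fun hk => Fin.ext (by exact_mod_cast hk), fun hk => by rw [hk]⟩
    simp only [hiff]
    rw [Finset.sum_ite_eq' Finset.univ q' (fun k => B q k * |y₂|),
      if_pos (Finset.mem_univ q'), habs]
  rw [hmid, hcol ((q' : ℤ) - 1) |y₃|, hcol ((q' : ℤ) + 1) |y₁|]
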